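/- Let f(z, ·) : ℝᵈ → ℝ be μ-strongly convex for each z and suppose ‖∇_θ f(z, θ)‖ ≤ L for all z and θ. Given points z₁, …, zₙ and a subset U ⊆ {1,…,n} with |U| = m < n, let θ̂ₙ minimize Fₙ(θ) = (1/n)∑ᵢ f(zᵢ, θ) and let θ̂ₙ,₋U minimize F₋U(θ) = (1/(n−m))∑_{i∉U} f(zᵢ, θ). Then ‖θ̂ₙ − θ̂ₙ,₋U‖ ≤ mL/(μn). -/

import Mathlib

open Set Finset

section Helpers

open Filter Topology InnerProductSpace

variable {E : Type*} [NormedAddCommGroup E] [InnerProductSpace ℝ E]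

/-- Growth of a strongly convex function above a minimizer. -/
lemma strong_min_growth {c : ℝ} {g : E → ℝ} (hg : StrongConvexOn univ c g)
    {x : E} (hx : IsMinOn g univ x) (y : E) :
    g x + c / 2 * ‖y - x‖ ^ 2 ≤ g y := by
  set M : ℝ := c / 2 * ‖y - x‖ ^ 2 with hM
  have key : ∀ t : ℝ, t ∈ Set.Ioo (0:ℝ) 1 → g x + (1 - t) * M ≤ g y := by
    intro t ht
    have h1 := hg.2 (mem_univ y) (mem_univ x) ht.1.le (by linarith [ht.2] : (0:ℝ) ≤ 1 - t)
      (by ring)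
    have h2 : g x ≤ g (t • y + (1 - t) • x) := hx (mem_univ _)
    simp only [smul_eq_mul] at h1
    rw [← hM] at h1
    have h5 : t * (g x + (1 - t) * M) ≤ t * g y := by nlinarith [h1, h2]
    exact le_of_mul_le_mul_left h5 ht.1
  have htend : Tendsto (fun t : ℝ => g x + (1 - t) * M) (𝓝[>] (0:ℝ)) (𝓝 (g x + M)) := by
    have : Tendsto (fun t : ℝ => g x + (1 - t) * M) (𝓝 (0:ℝ)) (𝓝 (g x + (1 - 0) * M)) := by
      apply Tendsto.add tendsto_const_nhds
      exact (tendsto_const_nhds.sub tendsto_id).mul tendsto_const_nhds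
    simpa using this.mono_left nhdsWithin_le_nhds
  refine le_of_tendsto htend ?_
  filter_upwards [Ioo_mem_nhdsGT_of_mem (by norm_num : (0:ℝ) ∈ Set.Ico (0:ℝ) 1)] with t ht
  exact key t ht

/-- First-order condition for strong convexity. -/
lemma strong_first_order [CompleteSpace E] {c : ℝ} {g : E → ℝ} (hg : StrongConvexOn univ c g)
    (hd : Differentiable ℝ g) (x y : E) :
    g x + inner ℝ (gradient g x) (y - x) + c / 2 * ‖y - x‖ ^ 2 ≤ g y := by
  set v : E := y - x with hv
  set M : ℝ := c / 2 * ‖y - x‖ ^ 2 with hM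
  have hψ : HasDerivAt (fun t : ℝ => g (x + t • v)) (fderiv ℝ g x v) 0 := by
    have hcurve : HasDerivAt (fun t : ℝ => x + t • v) v 0 := by
      simpa using ((hasDerivAt_id (0:ℝ)).smul_const v).const_add x
    have := (hd (x + (0:ℝ) • v)).hasFDerivAt.comp_hasDerivAt 0 hcurve
    simpa [Function.comp_def] using this
  have hslope : Tendsto (slope (fun t : ℝ => g (x + t • v)) 0) (𝓝[>] (0:ℝ))
      (𝓝 (fderiv ℝ g x v)) := by
    have := hasDerivAt_iff_tendsto_slope.1 hψ
    exact this.mono_left (nhdsWithin_mono _ (fun t ht => ne_of_gt ht))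
  have hRHS : Tendsto (fun t : ℝ => g y - g x - (1 - t) * M) (𝓝[>] (0:ℝ))
      (𝓝 (g y - g x - M)) := by
    have : Tendsto (fun t : ℝ => g y - g x - (1 - t) * M) (𝓝 (0:ℝ))
        (𝓝 (g y - g x - (1 - 0) * M)) := by
      apply Tendsto.sub tendsto_const_nhds
      exact (tendsto_const_nhds.sub tendsto_id).mul tendsto_const_nhds
    simpa using this.mono_left nhdsWithin_le_nhds
  have hle : fderiv ℝ g x v ≤ g y - g x - M := by
    refine le_of_tendsto_of_tendsto hslope hRHS ?_
    filter_upwards [Ioo_mem_nhdsGT_of_mem (by norm_num : (0:ℝ) ∈ Set.Ico (0:ℝ) 1)] with t ht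
    have h1 := hg.2 (mem_univ y) (mem_univ x) ht.1.le
      (by linarith [ht.2] : (0:ℝ) ≤ 1 - t) (by ring)
    simp only [smul_eq_mul] at h1
    rw [← hM] at h1
    have hcomb : t • y + (1 - t) • x = x + t • v := by rw [hv]; module
    rw [hcomb] at h1
    rw [slope_def_field, sub_zero, div_le_iff₀ ht.1]
    simp only [zero_smul, add_zero]
    nlinarith [h1]
  have hgrad : (inner ℝ (gradient g x) v : ℝ) = fderiv ℝ g x v := by
    rw [gradient]
    exact toDual_symm_apply
  linarith [hle, hgrad.le, hgrad.ge]

/-- Strong convexity of a finite sum of strongly convex functions. -/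
lemma strongConvexOn_sum {ι : Type*} (t : Finset ι) (g : ι → E → ℝ) {μ : ℝ}
    (h : ∀ i ∈ t, StrongConvexOn univ μ (g i)) :
    StrongConvexOn univ (t.card * μ) (fun x => ∑ i ∈ t, g i x) := by
  refine ⟨convex_univ, fun x _ y _ a b ha hb hab => ?_⟩
  have hsum : ∀ i ∈ t, g i (a • x + b • y)
      ≤ a * g i x + b * g i y - a * b * (μ / 2 * ‖x - y‖ ^ 2) := by
    intro i hi
    simpa [smul_eq_mul] using (h i hi).2 (mem_univ x) (mem_univ y) ha hb hab
  calc ∑ i ∈ t, g i (a • x + b • y)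
      ≤ ∑ i ∈ t, (a * g i x + b * g i y - a * b * (μ / 2 * ‖x - y‖ ^ 2)) :=
        Finset.sum_le_sum hsum
    _ = a • ∑ i ∈ t, g i x + b • ∑ i ∈ t, g i y
        - a * b * ((t.card * μ) / 2 * ‖x - y‖ ^ 2) := by
        rw [Finset.sum_sub_distrib, Finset.sum_add_distrib, ← Finset.mul_sum, ← Finset.mul_sum,
          Finset.sum_const, nsmul_eq_mul]
        simp only [smul_eq_mul]
        ring

/-- Gradient of a finite sum. -/
lemma gradient_sum' [CompleteSpace E] {ι : Type*} (t : Finset ι) (g : ι → E → ℝ) {x : E}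
    (h : ∀ i ∈ t, DifferentiableAt ℝ (g i) x) :
    gradient (fun θ => ∑ i ∈ t, g i θ) x = ∑ i ∈ t, gradient (g i) x := by
  simp only [gradient, fderiv_fun_sum h, map_sum]

lemma gradient_eq_zero_of_isMinOn [CompleteSpace E] {g : E → ℝ} {x : E}
    (h : IsMinOn g univ x) : gradient g x = 0 := by
  have hloc : IsLocalMin g x := h.isLocalMin univ_mem
  rw [gradient, hloc.fderiv_eq_zero, map_zero]

end Helpers

/-- Stability of the ERM under deletion of `m` points: if each `f z ·` is `μ`-strongly convex
and has gradients bounded by `L`, and `θ̂ₙ` minimizes the full empirical risk while `θ̂ₙ,₋U`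
minimizes the leave-`U`-out empirical risk with `|U| = m < n`, then
`‖θ̂ₙ − θ̂ₙ,₋U‖ ≤ mL/(μn)`. -/
theorem stmt1 {d n : ℕ} {Z : Type*} (μ L : ℝ) (hμ : 0 < μ) (hL : 0 ≤ L)
    (f : Z → EuclideanSpace ℝ (Fin d) → ℝ)
    (hconv : ∀ z, StrongConvexOn univ μ (f z))
    (hdiff : ∀ z, Differentiable ℝ (f z))
    (hgrad : ∀ z θ, ‖gradient (f z) θ‖ ≤ L)
    (z : Fin n → Z) (U : Finset (Fin n)) (m : ℕ) (hm : U.card = m) (hmn : m < n)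
    (θhat θhatU : EuclideanSpace ℝ (Fin d))
    (hθhat : IsMinOn (fun θ => (1 / (n : ℝ)) * ∑ i : Fin n, f (z i) θ) univ θhat)
    (hθhatU : IsMinOn
      (fun θ => (1 / ((n : ℝ) - m)) * ∑ i ∈ Uᶜ, f (z i) θ) univ θhatU) :
    ‖θhat - θhatU‖ ≤ m * L / (μ * n) := by
  have hnn : 0 < n := lt_of_le_of_lt (Nat.zero_le m) hmn
  have hn : (0:ℝ) < n := by exact_mod_cast hnn
  have hnm : (0:ℝ) < (n:ℝ) - m := by
    have : (m:ℝ) < n := by exact_mod_cast hmn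
    linarith
  set G : EuclideanSpace ℝ (Fin d) → ℝ := fun θ => ∑ i : Fin n, f (z i) θ with hG
  set H : EuclideanSpace ℝ (Fin d) → ℝ := fun θ => ∑ i ∈ Uᶜ, f (z i) θ with hH
  have hGmin : IsMinOn G univ θhat := by
    rw [isMinOn_iff] at hθhat ⊢
    intro θ hθ
    have := hθhat θ hθ
    have hpos : (0:ℝ) < 1 / n := by positivity
    exact le_of_mul_le_mul_left (by simpa [hG] using this) hpos
  have hHmin : IsMinOn H univ θhatU := by
    rw [isMinOn_iff] at hθhatU ⊢
    intro θ hθ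
    have := hθhatU θ hθ
    have hpos : (0:ℝ) < 1 / ((n:ℝ) - m) := by positivity
    exact le_of_mul_le_mul_left (by simpa [hH] using this) hpos
  have hGconv : StrongConvexOn univ ((n:ℝ) * μ) G := by
    have := strongConvexOn_sum (Finset.univ : Finset (Fin n)) (fun i => f (z i))
      (fun i _ => hconv (z i))
    simpa [hG] using this
  have hGdiff : Differentiable ℝ G := by
    apply Differentiable.fun_sum
    intro i _
    exact hdiff (z i)
  have hHdiff : Differentiable ℝ H := by
    apply Differentiable.fun_sum
    intro i _
    exact hdiff (z i)
  have hHgrad : gradient H θhatU = 0 := gradient_eq_zero_of_isMinOn hHmin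
  have hGgrad : gradient G θhatU = ∑ i ∈ U, gradient (f (z i)) θhatU := by
    have h1 : gradient G θhatU = ∑ i : Fin n, gradient (f (z i)) θhatU :=
      gradient_sum' Finset.univ (fun i => f (z i)) (fun i _ => (hdiff (z i)).differentiableAt)
    have h2 : gradient H θhatU = ∑ i ∈ Uᶜ, gradient (f (z i)) θhatU :=
      gradient_sum' Uᶜ (fun i => f (z i)) (fun i _ => (hdiff (z i)).differentiableAt)
    have h3 : (∑ i ∈ Uᶜ, gradient (f (z i)) θhatU) + ∑ i ∈ U, gradient (f (z i)) θhatU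
        = ∑ i : Fin n, gradient (f (z i)) θhatU := Finset.sum_compl_add_sum U _
    rw [h1, ← h3, ← h2, hHgrad, zero_add]
  have hGnorm : ‖gradient G θhatU‖ ≤ m * L := by
    rw [hGgrad]
    calc ‖∑ i ∈ U, gradient (f (z i)) θhatU‖ ≤ ∑ i ∈ U, ‖gradient (f (z i)) θhatU‖ :=
          norm_sum_le _ _
      _ ≤ ∑ _i ∈ U, L := Finset.sum_le_sum fun i _ => hgrad (z i) θhatU
      _ = m * L := by rw [Finset.sum_const, hm, nsmul_eq_mul]
  have hgrowth := strong_min_growth hGconv hGmin θhatU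
  have hfo := strong_first_order hGconv hGdiff θhatU θhat
  have hinner1 : (inner ℝ (gradient G θhatU) (θhat - θhatU) : ℝ)
      = - inner ℝ (gradient G θhatU) (θhatU - θhat) := by
    rw [← inner_neg_right, neg_sub]
  have hrev : ‖θhatU - θhat‖ = ‖θhat - θhatU‖ := norm_sub_rev _ _
  have hkey : ((n:ℝ) * μ) * ‖θhat - θhatU‖ ^ 2
      ≤ inner ℝ (gradient G θhatU) (θhatU - θhat) := by
    rw [hrev] at hgrowth
    nlinarith [hgrowth, hfo, hinner1]
  have hcs : (inner ℝ (gradient G θhatU) (θhatU - θhat) : ℝ)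
      ≤ (m * L) * ‖θhat - θhatU‖ := by
    calc (inner ℝ (gradient G θhatU) (θhatU - θhat) : ℝ)
        ≤ ‖gradient G θhatU‖ * ‖θhatU - θhat‖ := real_inner_le_norm _ _
      _ ≤ (m * L) * ‖θhat - θhatU‖ := by
          rw [hrev]
          exact mul_le_mul_of_nonneg_right hGnorm (norm_nonneg _)
  rcases eq_or_lt_of_le (norm_nonneg (θhat - θhatU)) with h0 | h0
  · rw [← h0]
    positivity
  · rw [le_div_iff₀ (by positivity : (0:ℝ) < μ * n)]
    nlinarith [hkey, hcs, h0]
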